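/- Let (T, q) be a classical solution of the Guyer–Krumhansl system on (0,l) with boundary conditions q(0,t) = q(l,t) = 0, let F(t) := (ρc/2)∫_0^l (∫_x^l T(s,t) ds)² dx + (ρc μ²/2)∫_0^l T(x,t)² dx + τ_q ∫_0^l q(x,t)(∫_x^l T(s,t) ds) dx, let 𝓛(t) := (2l² + 2μ² + τ_q k/(ρc)) E(t) + F(t), let C_T(t) := (μ² ∂_x q(0,t) − k T(0,t)) ∫_0^l T(s,t) ds, let β := min(2k/(ρc), 4(l² + μ²)/τ_q) and ω := β/(3l² + 3μ² + 2τ_q k/(ρc)). Then 𝓛 is differentiable and for all t ≥ 0, 𝓛'(t) ≤ −ω 𝓛(t) + |C_T(t)|. -/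

import Mathlib

open Set MeasureTheory intervalIntegral Filter Topology


lemma gk_param_deriv (f f' : ℝ → ℝ → ℝ) (a b t₀ C : ℝ)
    (hab : a ≤ b) (ht₀ : 0 ≤ t₀)
    (hd : ∀ x ∈ Icc a b, ∀ t ∈ Ici (0:ℝ), HasDerivWithinAt (f x) (f' x t) (Ici (0:ℝ)) t)
    (hc : ∀ s ∈ Ici (0:ℝ), ContinuousOn (fun x => f x s) (Icc a b))
    (hb : ∀ x ∈ Icc a b, ∀ s ∈ Icc (0:ℝ) (t₀+1), |f' x s| ≤ C) :
    HasDerivWithinAt (fun t => ∫ x in a..b, f x t) (∫ x in a..b, f' x t₀) (Ici (0:ℝ)) t₀ := by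
  rw [hasDerivWithinAt_iff_tendsto_slope]
  have hIsub : Set.uIoc a b ⊆ Icc a b := by
    rw [uIoc_of_le hab]; exact Ioc_subset_Icc_self
  have hevIcc : ∀ᶠ s in 𝓝[Ici (0:ℝ) \ {t₀}] t₀, s ∈ Icc (0:ℝ) (t₀+1) \ {t₀} := by
    have h1 : ∀ᶠ s in 𝓝 t₀, s ≤ t₀ + 1 :=
      tendsto_id.eventually_le_const (by linarith)
    filter_upwards [eventually_nhdsWithin_of_eventually_nhds h1, self_mem_nhdsWithin]
      with s hs1 hs2
    exact ⟨⟨hs2.1, hs1⟩, hs2.2⟩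
  have key : Tendsto (fun s => ∫ x in a..b, slope (f x) t₀ s)
      (𝓝[Ici (0:ℝ) \ {t₀}] t₀) (𝓝 (∫ x in a..b, f' x t₀)) := by
    apply intervalIntegral.tendsto_integral_filter_of_dominated_convergence (fun _ => C)
    · filter_upwards [self_mem_nhdsWithin] with s hs
      have : ContinuousOn (fun x => slope (f x) t₀ s) (Icc a b) := by
        have := ((hc s hs.1).sub (hc t₀ ht₀)).div_const (s - t₀)
        refine this.congr fun x hx => ?_
        simp [slope_def_field]
      exact (this.mono hIsub).aestronglyMeasurable (by rw [uIoc_of_le hab]; exact measurableSet_Ioc)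
    · filter_upwards [hevIcc] with s hs
      refine Eventually.of_forall fun x => fun hx => ?_
      have hx' := hIsub hx
      have hder : ∀ t ∈ Icc (0:ℝ) (t₀+1), HasDerivWithinAt (f x) (f' x t) (Icc (0:ℝ) (t₀+1)) t :=
        fun t ht => (hd x hx' t ht.1).mono (Icc_subset_Ici_self)
      have hbd : ∀ t ∈ Icc (0:ℝ) (t₀+1), ‖f' x t‖ ≤ C := fun t ht => by
        rw [Real.norm_eq_abs]; exact hb x hx' t ht
      have := Convex.norm_image_sub_le_of_norm_hasDerivWithin_le hder hbd (convex_Icc _ _)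
        ⟨ht₀, by linarith⟩ hs.1
      rw [slope_def_field, Real.norm_eq_abs, abs_div]
      rw [Real.norm_eq_abs, Real.norm_eq_abs] at this
      have hne : (0:ℝ) < |s - t₀| := by
        rw [abs_pos, sub_ne_zero]; exact fun h => hs.2 (by simp [h])
      rw [div_le_iff₀ hne]; exact this
    · exact intervalIntegrable_const
    · refine Eventually.of_forall fun x hx => ?_
      have := (hd x (hIsub hx) t₀ ht₀)
      rw [hasDerivWithinAt_iff_tendsto_slope] at this
      exact this.mono_left (nhdsWithin_mono _ (diff_subset_diff_left Subset.rfl))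
  refine key.congr' ?_
  filter_upwards [self_mem_nhdsWithin] with s hs
  have h1 : IntervalIntegrable (fun x => f x s) volume a b :=
    ((hc s hs.1).mono (by rw [uIcc_of_le hab])).intervalIntegrable
  have h2 : IntervalIntegrable (fun x => f x t₀) volume a b :=
    ((hc t₀ ht₀).mono (by rw [uIcc_of_le hab])).intervalIntegrable
  have : slope (fun t => ∫ x in a..b, f x t) t₀ s
      = ((∫ x in a..b, f x s) - ∫ x in a..b, f x t₀) / (s - t₀) := slope_def_field _ _ _
  rw [this, ← intervalIntegral.integral_sub h1 h2, ← intervalIntegral.integral_div]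
  exact intervalIntegral.integral_congr fun x hx => slope_def_field (f x) t₀ s

/-- slice continuity in x -/
lemma gk_sliceX {l : ℝ} {G : ℝ → ℝ → ℝ}
    (h : ContinuousOn (fun p : ℝ × ℝ => G p.1 p.2) (Icc (0:ℝ) l ×ˢ Ici (0:ℝ)))
    {t : ℝ} (ht : 0 ≤ t) : ContinuousOn (fun x => G x t) (Icc (0:ℝ) l) := by
  have : ContinuousOn (fun x : ℝ => ((x, t) : ℝ × ℝ)) (Icc (0:ℝ) l) :=
    (continuous_id.prodMk continuous_const).continuousOn
  exact h.comp this (fun y hy => ⟨hy, ht⟩)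

/-- slice continuity in t -/
lemma gk_sliceT {l : ℝ} {G : ℝ → ℝ → ℝ}
    (h : ContinuousOn (fun p : ℝ × ℝ => G p.1 p.2) (Icc (0:ℝ) l ×ˢ Ici (0:ℝ)))
    {x : ℝ} (hx : x ∈ Icc (0:ℝ) l) : ContinuousOn (fun t => G x t) (Ici (0:ℝ)) := by
  have : ContinuousOn (fun t : ℝ => ((x, t) : ℝ × ℝ)) (Ici (0:ℝ)) :=
    (continuous_const.prodMk continuous_id).continuousOn
  exact h.comp this (fun y hy => ⟨hx, hy⟩)

/-- A continuous function vanishing on the open box vanishes on the closed box. -/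
lemma gk_dense_zero {l : ℝ} (hl : 0 < l) {G : ℝ → ℝ → ℝ}
    (h : ContinuousOn (fun p : ℝ × ℝ => G p.1 p.2) (Icc (0:ℝ) l ×ˢ Ici (0:ℝ)))
    (h0 : ∀ x ∈ Ioo (0:ℝ) l, ∀ t ∈ Ioi (0:ℝ), G x t = 0) :
    ∀ x ∈ Icc (0:ℝ) l, ∀ t ∈ Ici (0:ℝ), G x t = 0 := by
  intro x hx t ht
  have hcl : (x, t) ∈ closure (Ioo (0:ℝ) l ×ˢ Ioi (0:ℝ)) := by
    rw [closure_prod_eq, closure_Ioo hl.ne, closure_Ioi]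
    exact ⟨hx, ht⟩
  have hne : (𝓝[Ioo (0:ℝ) l ×ˢ Ioi (0:ℝ)] (x, t)).NeBot :=
    mem_closure_iff_nhdsWithin_neBot.1 hcl
  have hsub : Ioo (0:ℝ) l ×ˢ Ioi (0:ℝ) ⊆ Icc (0:ℝ) l ×ˢ Ici (0:ℝ) :=
    prod_mono Ioo_subset_Icc_self Ioi_subset_Ici_self
  have h1 : Tendsto (fun p : ℝ × ℝ => G p.1 p.2) (𝓝[Ioo (0:ℝ) l ×ˢ Ioi (0:ℝ)] (x, t))
      (𝓝 (G x t)) := (h (x, t) ⟨hx, ht⟩).mono_left (nhdsWithin_mono _ hsub)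
  have h2 : Tendsto (fun p : ℝ × ℝ => G p.1 p.2) (𝓝[Ioo (0:ℝ) l ×ˢ Ioi (0:ℝ)] (x, t))
      (𝓝 0) := by
    refine Tendsto.congr' ?_ tendsto_const_nhds
    filter_upwards [self_mem_nhdsWithin] with p hp
    exact (h0 p.1 hp.1 p.2 hp.2).symm
  exact tendsto_nhds_unique h1 h2

/-- FTC helper -/
lemma gk_ftc (g g' : ℝ → ℝ) (a b : ℝ) (hab : a ≤ b) (hc : ContinuousOn g (Icc a b))
    (hd : ∀ x ∈ Ioo a b, HasDerivAt g (g' x) x) (hi : IntervalIntegrable g' volume a b) :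
    ∫ x in a..b, g' x = g b - g a :=
  intervalIntegral.integral_eq_sub_of_hasDeriv_right_of_le hab hc
    (fun x hx => (hd x hx).hasDerivWithinAt) hi



lemma gk_alg4 (tq rc m2 kk : ℝ) (ht : tq ≠ 0) (hr : rc ≠ 0) (a b d e : ℝ) :
    ((m2*a - b - kk*d)/tq)*e + b*(b/rc)
      = (1/tq)*(m2*(a*e) - b*e - kk*(d*e)) + (1/rc)*b^2 := by
  field_simp


lemma gk_alg5 (kk ll a b : ℝ) (hk : kk ≠ 0) (hl : ll ≠ 0) :
    ll^2/(2*kk)*a^2 + kk/(2*ll^2)*b^2 - a*b = (ll^2*a - kk*b)^2/(2*kk*ll^2) := by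
  field_simp; ring

lemma gk_alg6 (tq kk ll X : ℝ) (h : ll ≠ 0) :
    tq*(kk/(2*ll^2)*(ll^2*X)) = tq*kk/2*X := by
  field_simp

lemma gk_alg7 (l m2 tq kk rho cc a1 a2 : ℝ) (hk : kk ≠ 0) (hrc : rho*cc ≠ 0) :
    (3*l^2+3*m2+2*(tq*kk/(rho*cc)))*(rho*cc/2*a1 + tq/(2*kk)*a2)
      = (2*l^2+2*m2+tq*kk/(rho*cc))*(rho*cc/2*a1+tq/(2*kk)*a2)
        + (rho*cc*l^2/2 + rho*cc*m2/2 + tq*kk/2)*a1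
        + (m2*tq/(2*kk) + tq*tq/(2*(rho*cc)) + l^2*tq/(2*kk))*a2 := by
  have hr : rho ≠ 0 := left_ne_zero_of_mul hrc
  have hc : cc ≠ 0 := right_ne_zero_of_mul hrc
  field_simp; ring

lemma gk_algL (l m2 tq kk rho cc a1 a2 a3 a4 a5 qx0 T0 iT : ℝ)
    (htq : tq ≠ 0) (hk : kk ≠ 0) (hrc : rho*cc ≠ 0) :
    (2*l^2 + 2*m2 + tq*kk/(rho*cc)) *
      (rho*cc/2 * (-(2/(rho*cc)) * a4)
        + tq/(2*kk) * ((2/tq) * (m2*(-a3) - a2 - kk*(-a4))))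
    + (rho*cc/2 * ((2/(rho*cc)) * a5)
        + rho*cc*m2/2 * (-(2/(rho*cc)) * a4)
        + tq * ((1/tq) * (m2*(a4 - qx0*iT) - a5 - kk*(a1 - T0*iT)) + (1/(rho*cc)) * a2))
    = -((2*l^2+2*m2+tq*kk/(rho*cc))*m2/kk)*a3 - (2*(l^2+m2)/kk)*a2 - kk*a1
      - (m2*qx0 - kk*T0)*iT := by
  have hr : rho ≠ 0 := left_ne_zero_of_mul hrc
  have hc : cc ≠ 0 := right_ne_zero_of_mul hrc
  field_simp; ring

/-- A classical solution of the one-dimensional Guyer–Krumhansl system on `(0, l)`: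
`T` is the temperature, `q` the heat flux, and `Tt, Tx, qt, qx, qxx` are the
corresponding partial derivatives (continuous on `[0,l] × [0,∞)`), satisfying
`ρ c T_t + q_x = 0` and `τ_q q_t + q − μ² q_xx + k T_x = 0` on `(0,l) × (0,∞)`,
with adiabatic boundary conditions `q(0,t) = q(l,t) = 0` for all `t ≥ 0`. -/
structure IsGKSolution (l ρ c τq μ2 k : ℝ)
    (T q Tt Tx qt qx qxx : ℝ → ℝ → ℝ) : Prop where
  contT : ContinuousOn (fun p : ℝ × ℝ => T p.1 p.2) (Icc (0:ℝ) l ×ˢ Ici (0:ℝ))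
  contq : ContinuousOn (fun p : ℝ × ℝ => q p.1 p.2) (Icc (0:ℝ) l ×ˢ Ici (0:ℝ))
  hTt : ∀ x ∈ Icc (0:ℝ) l, ∀ t ∈ Ici (0:ℝ),
    HasDerivWithinAt (fun s => T x s) (Tt x t) (Ici (0:ℝ)) t
  hTx : ∀ x ∈ Icc (0:ℝ) l, ∀ t ∈ Ici (0:ℝ),
    HasDerivWithinAt (fun y => T y t) (Tx x t) (Icc (0:ℝ) l) x
  hqt : ∀ x ∈ Icc (0:ℝ) l, ∀ t ∈ Ici (0:ℝ),
    HasDerivWithinAt (fun s => q x s) (qt x t) (Ici (0:ℝ)) t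
  hqx : ∀ x ∈ Icc (0:ℝ) l, ∀ t ∈ Ici (0:ℝ),
    HasDerivWithinAt (fun y => q y t) (qx x t) (Icc (0:ℝ) l) x
  hqxx : ∀ x ∈ Icc (0:ℝ) l, ∀ t ∈ Ici (0:ℝ),
    HasDerivWithinAt (fun y => qx y t) (qxx x t) (Icc (0:ℝ) l) x
  contTt : ContinuousOn (fun p : ℝ × ℝ => Tt p.1 p.2) (Icc (0:ℝ) l ×ˢ Ici (0:ℝ))
  contTx : ContinuousOn (fun p : ℝ × ℝ => Tx p.1 p.2) (Icc (0:ℝ) l ×ˢ Ici (0:ℝ))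
  contqt : ContinuousOn (fun p : ℝ × ℝ => qt p.1 p.2) (Icc (0:ℝ) l ×ˢ Ici (0:ℝ))
  contqx : ContinuousOn (fun p : ℝ × ℝ => qx p.1 p.2) (Icc (0:ℝ) l ×ˢ Ici (0:ℝ))
  contqxx : ContinuousOn (fun p : ℝ × ℝ => qxx p.1 p.2) (Icc (0:ℝ) l ×ˢ Ici (0:ℝ))
  pde1 : ∀ x ∈ Ioo (0:ℝ) l, ∀ t ∈ Ioi (0:ℝ), ρ * c * Tt x t + qx x t = 0
  pde2 : ∀ x ∈ Ioo (0:ℝ) l, ∀ t ∈ Ioi (0:ℝ),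
    τq * qt x t + q x t - μ2 * qxx x t + k * Tx x t = 0
  bc0 : ∀ t : ℝ, 0 ≤ t → q 0 t = 0
  bcl : ∀ t : ℝ, 0 ≤ t → q l t = 0

/-- The functional energy `E(t) = (ρc/2)∫₀ˡ T² dx + (τ_q/(2k))∫₀ˡ q² dx`. -/
noncomputable def gkEnergy (l ρ c τq k : ℝ) (T q : ℝ → ℝ → ℝ) (t : ℝ) : ℝ :=
  ρ * c / 2 * (∫ x in (0:ℝ)..l, (T x t) ^ 2)
    + τq / (2 * k) * (∫ x in (0:ℝ)..l, (q x t) ^ 2)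

/-- The auxiliary functional
`F(t) = (ρc/2)∫₀ˡ (∫ₓˡ T ds)² dx + (ρcμ²/2)∫₀ˡ T² dx + τ_q ∫₀ˡ q (∫ₓˡ T ds) dx`. -/
noncomputable def gkF (l ρ c τq μ2 : ℝ) (T q : ℝ → ℝ → ℝ) (t : ℝ) : ℝ :=
  ρ * c / 2 * (∫ x in (0:ℝ)..l, (∫ s in x..l, T s t) ^ 2)
    + ρ * c * μ2 / 2 * (∫ x in (0:ℝ)..l, (T x t) ^ 2)
    + τq * (∫ x in (0:ℝ)..l, q x t * (∫ s in x..l, T s t))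

/-- The boundary term `C_T(t) = (μ² ∂ₓq(0,t) − k T(0,t)) ∫₀ˡ T(s,t) ds`. -/
noncomputable def gkCT (l μ2 k : ℝ) (T qx : ℝ → ℝ → ℝ) (t : ℝ) : ℝ :=
  (μ2 * qx 0 t - k * T 0 t) * ∫ s in (0:ℝ)..l, T s t

/-- The Lyapunov functional `𝓛(t) = (2l² + 2μ² + τ_q k/(ρc)) E(t) + F(t)`. -/
noncomputable def gkL (l ρ c τq μ2 k : ℝ) (T q : ℝ → ℝ → ℝ) (t : ℝ) : ℝ :=
  (2 * l ^ 2 + 2 * μ2 + τq * k / (ρ * c)) * gkEnergy l ρ c τq k T q t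
    + gkF l ρ c τq μ2 T q t

set_option maxHeartbeats 2000000 in
/-- for a classical solution of the Guyer–Krumhansl system, with
`β = min(2k/(ρc), 4(l²+μ²)/τ_q)` and `ω = β/(3l²+3μ²+2τ_q k/(ρc))`, the Lyapunov
functional is differentiable and satisfies `𝓛'(t) ≤ −ω 𝓛(t) + |C_T(t)|` for all
`t ≥ 0`. -/
theorem gk_lyapunov_decay
    (l ρ c τq μ2 k : ℝ) (hl : 0 < l) (hρ : 0 < ρ) (hc : 0 < c)
    (hτq : 0 < τq) (hμ2 : 0 < μ2) (hk : 0 < k)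
    (T q Tt Tx qt qx qxx : ℝ → ℝ → ℝ)
    (hgk : IsGKSolution l ρ c τq μ2 k T q Tt Tx qt qx qxx)
    (β ω : ℝ)
    (hβ : β = min (2 * k / (ρ * c)) (4 * (l ^ 2 + μ2) / τq))
    (hω : ω = β / (3 * l ^ 2 + 3 * μ2 + 2 * (τq * k / (ρ * c)))) :
    ∀ t : ℝ, 0 ≤ t →
      ∃ L' : ℝ, HasDerivWithinAt (gkL l ρ c τq μ2 k T q) L' (Ici (0:ℝ)) t
        ∧ L' ≤ -ω * gkL l ρ c τq μ2 k T q t + |gkCT l μ2 k T qx t| := by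

  intro t₀ ht₀
  have hll : (0:ℝ) ≤ l := hl.le
  have hρc : (0:ℝ) < ρ * c := mul_pos hρ hc
  -- extended PDEs
  have pde1' : ∀ x ∈ Icc (0:ℝ) l, ∀ t ∈ Ici (0:ℝ), ρ * c * Tt x t + qx x t = 0 :=
    gk_dense_zero hl ((continuousOn_const.mul hgk.contTt).add hgk.contqx) hgk.pde1
  have pde2' : ∀ x ∈ Icc (0:ℝ) l, ∀ t ∈ Ici (0:ℝ),
      τq * qt x t + q x t - μ2 * qxx x t + k * Tx x t = 0 :=
    gk_dense_zero hl
      ((((continuousOn_const.mul hgk.contqt).add hgk.contq).sub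
        (continuousOn_const.mul hgk.contqxx)).add (continuousOn_const.mul hgk.contTx))
      hgk.pde2
  set u : ℝ → ℝ → ℝ := fun x t => ∫ s in x..l, T s t with hu_def
  -- integrability helper
  have ii : ∀ {g : ℝ → ℝ}, ContinuousOn g (Icc (0:ℝ) l) → IntervalIntegrable g volume 0 l :=
    fun {g} h => (h.mono (by rw [uIcc_of_le hll])).intervalIntegrable
  -- time derivative of u
  have hu_t : ∀ x ∈ Icc (0:ℝ) l, ∀ t ∈ Ici (0:ℝ),
      HasDerivWithinAt (fun s => u x s) (q x t / (ρ*c)) (Ici (0:ℝ)) t := by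
    intro x hx t ht
    obtain ⟨M, hM⟩ := ((isCompact_Icc.prod isCompact_Icc) :
        IsCompact (Icc (0:ℝ) l ×ˢ Icc (0:ℝ) (t+1))).exists_bound_of_continuousOn
      (hgk.contTt.mono (prod_mono Subset.rfl Icc_subset_Ici_self))
    have hsub : Icc x l ⊆ Icc (0:ℝ) l := Icc_subset_Icc hx.1 le_rfl
    have base := gk_param_deriv (fun s t' => T s t') (fun s t' => Tt s t') x l t M hx.2 ht
      (fun s hs t' ht' => hgk.hTt s (hsub hs) t' ht')
      (fun s hs => (gk_sliceX hgk.contT hs).mono hsub)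
      (fun s hs t' ht' => by
        have := hM (s, t') ⟨hsub hs, ht'⟩; rwa [Real.norm_eq_abs] at this)
    have heq : (∫ s in x..l, Tt s t) = q x t / (ρ*c) := by
      have e1 : (∫ s in x..l, Tt s t) = ∫ s in x..l, (-(1/(ρ*c))) * qx s t := by
        refine intervalIntegral.integral_congr fun s hs => ?_
        rw [uIcc_of_le hx.2] at hs
        have h := pde1' s (hsub hs) t ht
        field_simp
        linarith
      rw [e1, intervalIntegral.integral_const_mul]
      have e2 : (∫ s in x..l, qx s t) = q l t - q x t := by
        refine gk_ftc (fun y => q y t) (fun y => qx y t) x l hx.2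
          ((gk_sliceX hgk.contq ht).mono hsub) (fun y hy => ?_) ?_
        · exact (hgk.hqx y (hsub (Ioo_subset_Icc_self hy)) t ht).hasDerivAt
            (Icc_mem_nhds (lt_of_le_of_lt hx.1 hy.1) hy.2)
        · exact ((gk_sliceX hgk.contqx ht).mono
            (by rw [uIcc_of_le hx.2]; exact hsub)).intervalIntegrable
      rw [e2, hgk.bcl t ht]
      field_simp; ring
    exact heq ▸ base
  -- space derivative of u
  have hu_x : ∀ t ∈ Ici (0:ℝ), ∀ x ∈ Icc (0:ℝ) l,
      HasDerivWithinAt (fun y => u y t) (-(T x t)) (Icc (0:ℝ) l) x := by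
    intro t ht x hx
    haveI : Fact (x ∈ Icc (0:ℝ) l) := ⟨hx⟩
    have hcT : ContinuousOn (fun s => T s t) (Icc (0:ℝ) l) := gk_sliceX hgk.contT ht
    have hprim : HasDerivWithinAt (fun y => ∫ s in (0:ℝ)..y, T s t) (T x t) (Icc (0:ℝ) l) x := by
      have hint : IntervalIntegrable (fun s => T s t) volume 0 x :=
        (hcT.mono (by rw [uIcc_of_le hx.1]; exact Icc_subset_Icc_right hx.2)).intervalIntegrable
      exact intervalIntegral.integral_hasDerivWithinAt_right hint
        ⟨Icc (0:ℝ) l, self_mem_nhdsWithin, (hcT.aestronglyMeasurable measurableSet_Icc)⟩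
        (hcT x hx)
    have : HasDerivWithinAt (fun y => (∫ s in (0:ℝ)..l, T s t) - ∫ s in (0:ℝ)..y, T s t)
        (-(T x t)) (Icc (0:ℝ) l) x := by
      simpa using (hasDerivWithinAt_const x (Icc (0:ℝ) l) (∫ s in (0:ℝ)..l, T s t)).fun_sub hprim
    refine this.congr (fun y hy => ?_) ?_
    · show u y t = _
      rw [hu_def]
      have i1 : IntervalIntegrable (fun s => T s t) volume 0 y :=
        (hcT.mono (by rw [uIcc_of_le hy.1]; exact Icc_subset_Icc_right hy.2)).intervalIntegrable
      have i2 : IntervalIntegrable (fun s => T s t) volume y l :=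
        (hcT.mono (by rw [uIcc_of_le hy.2]; exact Icc_subset_Icc hy.1 le_rfl)).intervalIntegrable
      have := intervalIntegral.integral_add_adjacent_intervals i1 i2
      simp only []
      linarith
    · show u x t = _
      rw [hu_def]
      have i1 : IntervalIntegrable (fun s => T s t) volume 0 x :=
        (hcT.mono (by rw [uIcc_of_le hx.1]; exact Icc_subset_Icc_right hx.2)).intervalIntegrable
      have i2 : IntervalIntegrable (fun s => T s t) volume x l :=
        (hcT.mono (by rw [uIcc_of_le hx.2]; exact Icc_subset_Icc hx.1 le_rfl)).intervalIntegrable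
      have := intervalIntegral.integral_add_adjacent_intervals i1 i2
      simp only []
      linarith
  have cu : ∀ t ∈ Ici (0:ℝ), ContinuousOn (fun x => u x t) (Icc (0:ℝ) l) :=
    fun t ht x hx => (hu_x t ht x hx).continuousWithinAt
  -- bounds on the compact box K = Icc 0 l × Icc 0 (t₀+1)
  have hKsub : Icc (0:ℝ) l ×ˢ Icc (0:ℝ) (t₀+1) ⊆ Icc (0:ℝ) l ×ˢ Ici (0:ℝ) :=
    prod_mono Subset.rfl Icc_subset_Ici_self
  have hKcompact : IsCompact (Icc (0:ℝ) l ×ˢ Icc (0:ℝ) (t₀+1)) :=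
    isCompact_Icc.prod isCompact_Icc
  obtain ⟨MT, hMT⟩ := hKcompact.exists_bound_of_continuousOn (hgk.contT.mono hKsub)
  obtain ⟨Mq, hMq⟩ := hKcompact.exists_bound_of_continuousOn (hgk.contq.mono hKsub)
  obtain ⟨MTt, hMTt⟩ := hKcompact.exists_bound_of_continuousOn (hgk.contTt.mono hKsub)
  obtain ⟨Mqt, hMqt⟩ := hKcompact.exists_bound_of_continuousOn (hgk.contqt.mono hKsub)
  have hmemK : ((0:ℝ), (0:ℝ)) ∈ Icc (0:ℝ) l ×ˢ Icc (0:ℝ) (t₀+1) :=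
    ⟨⟨le_rfl, hll⟩, ⟨le_rfl, show (0:ℝ) ≤ t₀+1 by linarith⟩⟩
  have hMT0 : 0 ≤ MT := le_trans (norm_nonneg _) (hMT _ hmemK)
  have hMq0 : 0 ≤ Mq := le_trans (norm_nonneg _) (hMq _ hmemK)
  have hMTt0 : 0 ≤ MTt := le_trans (norm_nonneg _) (hMTt _ hmemK)
  have hMqt0 : 0 ≤ Mqt := le_trans (norm_nonneg _) (hMqt _ hmemK)
  have hbu : ∀ x ∈ Icc (0:ℝ) l, ∀ s ∈ Icc (0:ℝ) (t₀+1), |u x s| ≤ MT * l := by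
    intro x hx s hs
    have h1 : ‖∫ s' in x..l, T s' s‖ ≤ MT * |l - x| := by
      refine intervalIntegral.norm_integral_le_of_norm_le_const fun y hy => ?_
      rw [uIoc_of_le hx.2] at hy
      exact hMT (y, s) ⟨⟨le_trans hx.1 hy.1.le, hy.2⟩, hs⟩
    rw [← Real.norm_eq_abs]
    refine h1.trans ?_
    have : |l - x| ≤ l := by rw [abs_of_nonneg (by linarith [hx.2])]; linarith [hx.1]
    nlinarith
  -- derivatives of the four integrals
  have hI1 : HasDerivWithinAt (fun t => ∫ x in (0:ℝ)..l, T x t ^ 2)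
      (∫ x in (0:ℝ)..l, 2 * T x t₀ * Tt x t₀) (Ici (0:ℝ)) t₀ := by
    refine gk_param_deriv _ _ 0 l t₀ (2*MT*MTt) hll ht₀
      (fun x hx t ht => by simpa [pow_one] using ((hgk.hTt x hx t ht).fun_pow 2))
      (fun s hs => (gk_sliceX hgk.contT hs).pow 2) ?_
    intro x hx s hs
    have h1 := hMT (x, s) ⟨hx, hs⟩; have h2 := hMTt (x, s) ⟨hx, hs⟩
    rw [Real.norm_eq_abs] at h1 h2
    have e : |2 * T x s * Tt x s| = 2 * |T x s| * |Tt x s| := by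
      rw [abs_mul, abs_mul]; norm_num
    rw [e]
    nlinarith [abs_nonneg (T x s), abs_nonneg (Tt x s)]
  have hI2 : HasDerivWithinAt (fun t => ∫ x in (0:ℝ)..l, q x t ^ 2)
      (∫ x in (0:ℝ)..l, 2 * q x t₀ * qt x t₀) (Ici (0:ℝ)) t₀ := by
    refine gk_param_deriv _ _ 0 l t₀ (2*Mq*Mqt) hll ht₀
      (fun x hx t ht => by simpa [pow_one] using ((hgk.hqt x hx t ht).fun_pow 2))
      (fun s hs => (gk_sliceX hgk.contq hs).pow 2) ?_
    intro x hx s hs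
    have h1 := hMq (x, s) ⟨hx, hs⟩; have h2 := hMqt (x, s) ⟨hx, hs⟩
    rw [Real.norm_eq_abs] at h1 h2
    have e : |2 * q x s * qt x s| = 2 * |q x s| * |qt x s| := by
      rw [abs_mul, abs_mul]; norm_num
    rw [e]
    nlinarith [abs_nonneg (q x s), abs_nonneg (qt x s)]
  have hI3 : HasDerivWithinAt (fun t => ∫ x in (0:ℝ)..l, u x t ^ 2)
      (∫ x in (0:ℝ)..l, 2 * u x t₀ * (q x t₀ / (ρ*c))) (Ici (0:ℝ)) t₀ := by
    refine gk_param_deriv _ _ 0 l t₀ (2*(MT*l)*(Mq/(ρ*c))) hll ht₀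
      (fun x hx t ht => by simpa [pow_one] using ((hu_t x hx t ht).fun_pow 2))
      (fun s hs => (cu s hs).pow 2) ?_
    intro x hx s hs
    have h1 := hbu x hx s hs
    have h2 := hMq (x, s) ⟨hx, hs⟩
    rw [Real.norm_eq_abs] at h2
    have e : |2 * u x s * (q x s / (ρ*c))| = 2 * |u x s| * (|q x s| / (ρ*c)) := by
      rw [abs_mul, abs_mul, abs_div, abs_of_pos hρc]; norm_num
    rw [e]
    have hd1 : |q x s| / (ρ*c) ≤ Mq / (ρ*c) := by gcongr
    nlinarith [abs_nonneg (u x s), abs_nonneg (q x s),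
      div_nonneg (abs_nonneg (q x s)) hρc.le, div_nonneg (le_trans (abs_nonneg _) h2) hρc.le]
  have hI4 : HasDerivWithinAt (fun t => ∫ x in (0:ℝ)..l, q x t * u x t)
      (∫ x in (0:ℝ)..l, (qt x t₀ * u x t₀ + q x t₀ * (q x t₀ / (ρ*c)))) (Ici (0:ℝ)) t₀ := by
    refine gk_param_deriv _ _ 0 l t₀ (Mqt*(MT*l) + Mq*(Mq/(ρ*c))) hll ht₀
      (fun x hx t ht => (hgk.hqt x hx t ht).mul (hu_t x hx t ht))
      (fun s hs => (gk_sliceX hgk.contq hs).mul (cu s hs)) ?_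
    intro x hx s hs
    have h1 := hbu x hx s hs
    have h2 := hMq (x, s) ⟨hx, hs⟩
    have h3 := hMqt (x, s) ⟨hx, hs⟩
    rw [Real.norm_eq_abs] at h2 h3
    calc |qt x s * u x s + q x s * (q x s / (ρ*c))|
        ≤ |qt x s * u x s| + |q x s * (q x s / (ρ*c))| := abs_add_le _ _
      _ = |qt x s| * |u x s| + |q x s| * (|q x s| / (ρ*c)) := by
          rw [abs_mul, abs_mul, abs_div, abs_of_pos hρc]
      _ ≤ Mqt*(MT*l) + Mq*(Mq/(ρ*c)) := by
          have e1 : |q x s| / (ρ*c) ≤ Mq / (ρ*c) := by gcongr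
          have e2 : (0:ℝ) ≤ |q x s| / (ρ*c) := div_nonneg (abs_nonneg _) hρc.le
          nlinarith [abs_nonneg (qt x s), abs_nonneg (u x s), abs_nonneg (q x s),
            div_nonneg (le_trans (abs_nonneg _) h2) hρc.le]
  -- assemble the derivative of the Lyapunov functional
  refine ⟨(2*l^2 + 2*μ2 + τq*k/(ρ*c)) *
      (ρ*c/2 * (∫ x in (0:ℝ)..l, 2 * T x t₀ * Tt x t₀)
        + τq/(2*k) * (∫ x in (0:ℝ)..l, 2 * q x t₀ * qt x t₀))
    + (ρ*c/2 * (∫ x in (0:ℝ)..l, 2 * u x t₀ * (q x t₀ / (ρ*c)))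
        + ρ*c*μ2/2 * (∫ x in (0:ℝ)..l, 2 * T x t₀ * Tt x t₀)
        + τq * (∫ x in (0:ℝ)..l, (qt x t₀ * u x t₀ + q x t₀ * (q x t₀ / (ρ*c))))), ?_, ?_⟩
  · show HasDerivWithinAt (fun t => (2*l^2 + 2*μ2 + τq*k/(ρ*c)) *
        (ρ*c/2 * (∫ x in (0:ℝ)..l, T x t ^ 2) + τq/(2*k) * (∫ x in (0:ℝ)..l, q x t ^ 2))
      + (ρ*c/2 * (∫ x in (0:ℝ)..l, u x t ^ 2)
        + ρ*c*μ2/2 * (∫ x in (0:ℝ)..l, T x t ^ 2)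
        + τq * (∫ x in (0:ℝ)..l, q x t * u x t))) _ (Ici (0:ℝ)) t₀
    exact (((hI1.const_mul (ρ*c/2)).add (hI2.const_mul (τq/(2*k)))).const_mul _).add
      (((hI3.const_mul (ρ*c/2)).add (hI1.const_mul (ρ*c*μ2/2))).add (hI4.const_mul τq))
  · -- the inequality
    have cT0 : ContinuousOn (fun x => T x t₀) (Icc (0:ℝ) l) := gk_sliceX hgk.contT ht₀
    have cq0 : ContinuousOn (fun x => q x t₀) (Icc (0:ℝ) l) := gk_sliceX hgk.contq ht₀
    have cTx0 : ContinuousOn (fun x => Tx x t₀) (Icc (0:ℝ) l) := gk_sliceX hgk.contTx ht₀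
    have cqx0 : ContinuousOn (fun x => qx x t₀) (Icc (0:ℝ) l) := gk_sliceX hgk.contqx ht₀
    have cqxx0 : ContinuousOn (fun x => qxx x t₀) (Icc (0:ℝ) l) := gk_sliceX hgk.contqxx ht₀
    have cu0 : ContinuousOn (fun x => u x t₀) (Icc (0:ℝ) l) := cu t₀ ht₀
    have hTx_at : ∀ x ∈ Ioo (0:ℝ) l, HasDerivAt (fun y => T y t₀) (Tx x t₀) x :=
      fun x hx => (hgk.hTx x (Ioo_subset_Icc_self hx) t₀ ht₀).hasDerivAt (Icc_mem_nhds hx.1 hx.2)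
    have hqx_at : ∀ x ∈ Ioo (0:ℝ) l, HasDerivAt (fun y => q y t₀) (qx x t₀) x :=
      fun x hx => (hgk.hqx x (Ioo_subset_Icc_self hx) t₀ ht₀).hasDerivAt (Icc_mem_nhds hx.1 hx.2)
    have hqxx_at : ∀ x ∈ Ioo (0:ℝ) l, HasDerivAt (fun y => qx y t₀) (qxx x t₀) x :=
      fun x hx => (hgk.hqxx x (Ioo_subset_Icc_self hx) t₀ ht₀).hasDerivAt (Icc_mem_nhds hx.1 hx.2)
    have hux_at : ∀ x ∈ Ioo (0:ℝ) l, HasDerivAt (fun y => u y t₀) (-(T x t₀)) x :=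
      fun x hx => (hu_x t₀ ht₀ x (Ioo_subset_Icc_self hx)).hasDerivAt (Icc_mem_nhds hx.1 hx.2)
    have hul : u l t₀ = 0 := intervalIntegral.integral_same
    have hu0 : u 0 t₀ = ∫ s in (0:ℝ)..l, T s t₀ := rfl
    -- integration by parts identities
    have E1 : (∫ x in (0:ℝ)..l, Tx x t₀ * q x t₀) = -(∫ x in (0:ℝ)..l, T x t₀ * qx x t₀) := by
      have h := gk_ftc (fun y => T y t₀ * q y t₀)
        (fun y => Tx y t₀ * q y t₀ + T y t₀ * qx y t₀) 0 l hll (cT0.fun_mul cq0)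
        (fun x hx => (hTx_at x hx).mul (hqx_at x hx))
        (ii ((cTx0.fun_mul cq0).add (cT0.fun_mul cqx0)))
      rw [intervalIntegral.integral_add (ii (cTx0.fun_mul cq0)) (ii (cT0.fun_mul cqx0)),
        hgk.bc0 t₀ ht₀, hgk.bcl t₀ ht₀] at h
      simp only [mul_zero, sub_zero, zero_sub] at h
      linarith
    have E2 : (∫ x in (0:ℝ)..l, q x t₀ * qxx x t₀) = -(∫ x in (0:ℝ)..l, qx x t₀ ^ 2) := by
      have h := gk_ftc (fun y => q y t₀ * qx y t₀)
        (fun y => qx y t₀ ^ 2 + q y t₀ * qxx y t₀) 0 l hll (cq0.fun_mul cqx0)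
        (fun x hx => by simpa [pow_two] using (hqx_at x hx).fun_mul (hqxx_at x hx))
        (ii ((cqx0.fun_pow 2).add (cq0.fun_mul cqxx0)))
      rw [intervalIntegral.integral_add (ii (cqx0.fun_pow 2)) (ii (cq0.fun_mul cqxx0)),
        hgk.bc0 t₀ ht₀, hgk.bcl t₀ ht₀] at h
      simp only [zero_mul, sub_zero, zero_sub] at h
      linarith
    have E3 : (∫ x in (0:ℝ)..l, qxx x t₀ * u x t₀)
        = (∫ x in (0:ℝ)..l, T x t₀ * qx x t₀) - qx 0 t₀ * (∫ s in (0:ℝ)..l, T s t₀) := by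
      have h := gk_ftc (fun y => qx y t₀ * u y t₀)
        (fun y => qxx y t₀ * u y t₀ + qx y t₀ * -(T y t₀)) 0 l hll (cqx0.fun_mul cu0)
        (fun x hx => (hqxx_at x hx).mul (hux_at x hx))
        (ii ((cqxx0.fun_mul cu0).add (cqx0.fun_mul cT0.fun_neg)))
      rw [intervalIntegral.integral_add (ii (cqxx0.fun_mul cu0)) (ii (cqx0.fun_mul cT0.fun_neg)),
        hul, hu0] at h
      have h2 : (∫ x in (0:ℝ)..l, qx x t₀ * -(T x t₀))
          = -(∫ x in (0:ℝ)..l, T x t₀ * qx x t₀) := by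
        rw [← intervalIntegral.integral_neg]
        exact intervalIntegral.integral_congr fun x hx => by ring
      rw [h2] at h
      simp only [mul_zero, zero_sub] at h
      linarith
    have E4 : (∫ x in (0:ℝ)..l, Tx x t₀ * u x t₀)
        = (∫ x in (0:ℝ)..l, T x t₀ ^ 2) - T 0 t₀ * (∫ s in (0:ℝ)..l, T s t₀) := by
      have h := gk_ftc (fun y => T y t₀ * u y t₀)
        (fun y => Tx y t₀ * u y t₀ + T y t₀ * -(T y t₀)) 0 l hll (cT0.fun_mul cu0)
        (fun x hx => (hTx_at x hx).mul (hux_at x hx))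
        (ii ((cTx0.fun_mul cu0).add (cT0.fun_mul cT0.fun_neg)))
      rw [intervalIntegral.integral_add (ii (cTx0.fun_mul cu0)) (ii (cT0.fun_mul cT0.fun_neg)),
        hul, hu0] at h
      have h2 : (∫ x in (0:ℝ)..l, T x t₀ * -(T x t₀)) = -(∫ x in (0:ℝ)..l, T x t₀ ^ 2) := by
        rw [← intervalIntegral.integral_neg]
        exact intervalIntegral.integral_congr fun x hx => by ring
      rw [h2] at h
      simp only [mul_zero, zero_sub] at h
      linarith
    -- rewriting the derivative values using the PDEs
    have D1 : (∫ x in (0:ℝ)..l, 2 * T x t₀ * Tt x t₀)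
        = -(2/(ρ*c)) * (∫ x in (0:ℝ)..l, T x t₀ * qx x t₀) := by
      rw [← intervalIntegral.integral_const_mul]
      refine intervalIntegral.integral_congr fun x hx => ?_
      rw [uIcc_of_le hll] at hx
      have h := pde1' x hx t₀ ht₀
      have hqxe : qx x t₀ = -(ρ*c*Tt x t₀) := by linarith
      rw [hqxe]; field_simp
    have D2 : (∫ x in (0:ℝ)..l, 2 * q x t₀ * qt x t₀)
        = (2/τq) * (μ2*(∫ x in (0:ℝ)..l, q x t₀ * qxx x t₀)
            - (∫ x in (0:ℝ)..l, q x t₀ ^ 2) - k*(∫ x in (0:ℝ)..l, Tx x t₀ * q x t₀)) := by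
      have step : (∫ x in (0:ℝ)..l, 2 * q x t₀ * qt x t₀)
          = ∫ x in (0:ℝ)..l,
            (2/τq) * (μ2*(q x t₀ * qxx x t₀) - q x t₀ ^ 2 - k*(Tx x t₀ * q x t₀)) := by
        refine intervalIntegral.integral_congr fun x hx => ?_
        rw [uIcc_of_le hll] at hx
        have h := pde2' x hx t₀ ht₀
        have hqte : qt x t₀ = (μ2*qxx x t₀ - q x t₀ - k*Tx x t₀)/τq := by
          field_simp; linarith
        rw [hqte]; field_simp
      rw [step, intervalIntegral.integral_const_mul]
      congr 1
      rw [intervalIntegral.integral_sub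
          ((ii (continuousOn_const.fun_mul (cq0.fun_mul cqxx0))).sub (ii (cq0.fun_pow 2)))
          (ii (continuousOn_const.fun_mul (cTx0.fun_mul cq0))),
        intervalIntegral.integral_sub (ii (continuousOn_const.fun_mul (cq0.fun_mul cqxx0)))
          (ii (cq0.fun_pow 2)),
        intervalIntegral.integral_const_mul, intervalIntegral.integral_const_mul]
    have D3 : (∫ x in (0:ℝ)..l, 2 * u x t₀ * (q x t₀ / (ρ*c)))
        = (2/(ρ*c)) * (∫ x in (0:ℝ)..l, q x t₀ * u x t₀) := by
      rw [← intervalIntegral.integral_const_mul]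
      refine intervalIntegral.integral_congr fun x hx => ?_
      field_simp
    have D4 : (∫ x in (0:ℝ)..l, (qt x t₀ * u x t₀ + q x t₀ * (q x t₀ / (ρ*c))))
        = (1/τq) * (μ2*(∫ x in (0:ℝ)..l, qxx x t₀ * u x t₀)
            - (∫ x in (0:ℝ)..l, q x t₀ * u x t₀) - k*(∫ x in (0:ℝ)..l, Tx x t₀ * u x t₀))
          + (1/(ρ*c)) * (∫ x in (0:ℝ)..l, q x t₀ ^ 2) := by
      have step : (∫ x in (0:ℝ)..l, (qt x t₀ * u x t₀ + q x t₀ * (q x t₀ / (ρ*c))))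
          = ∫ x in (0:ℝ)..l,
            ((1/τq) * (μ2*(qxx x t₀ * u x t₀) - q x t₀ * u x t₀ - k*(Tx x t₀ * u x t₀))
              + (1/(ρ*c)) * (q x t₀ ^ 2)) := by
        refine intervalIntegral.integral_congr fun x hx => ?_
        rw [uIcc_of_le hll] at hx
        have h := pde2' x hx t₀ ht₀
        have hqte : qt x t₀ = (μ2*qxx x t₀ - q x t₀ - k*Tx x t₀)/τq := by
          field_simp; linarith
        rw [hqte]; exact gk_alg4 τq (ρ*c) μ2 k hτq.ne' hρc.ne' _ _ _ _
      rw [step, intervalIntegral.integral_add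
          (IntervalIntegrable.const_mul (((ii (continuousOn_const.fun_mul (cqxx0.fun_mul cu0))).sub
            (ii (cq0.fun_mul cu0))).sub (ii (continuousOn_const.fun_mul (cTx0.fun_mul cu0)))) _)
          ((ii (cq0.fun_pow 2)).const_mul _),
        intervalIntegral.integral_const_mul, intervalIntegral.integral_const_mul,
        intervalIntegral.integral_sub
          ((ii (continuousOn_const.fun_mul (cqxx0.fun_mul cu0))).sub (ii (cq0.fun_mul cu0)))
          (ii (continuousOn_const.fun_mul (cTx0.fun_mul cu0))),
        intervalIntegral.integral_sub (ii (continuousOn_const.fun_mul (cqxx0.fun_mul cu0)))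
          (ii (cq0.fun_mul cu0)),
        intervalIntegral.integral_const_mul, intervalIntegral.integral_const_mul]
    -- nonnegativity facts
    have f1 : (0:ℝ) ≤ ∫ x in (0:ℝ)..l, T x t₀ ^ 2 :=
      intervalIntegral.integral_nonneg hll (fun x _ => sq_nonneg _)
    have f2 : (0:ℝ) ≤ ∫ x in (0:ℝ)..l, q x t₀ ^ 2 :=
      intervalIntegral.integral_nonneg hll (fun x _ => sq_nonneg _)
    have f3 : (0:ℝ) ≤ ∫ x in (0:ℝ)..l, qx x t₀ ^ 2 :=
      intervalIntegral.integral_nonneg hll (fun x _ => sq_nonneg _)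
    -- Cauchy–Schwarz bound : ∫ u² ≤ l² ∫ T²
    have f4 : (∫ x in (0:ℝ)..l, u x t₀ ^ 2) ≤ l^2 * (∫ x in (0:ℝ)..l, T x t₀ ^ 2) := by
      have hpt : ∀ x ∈ Icc (0:ℝ) l, u x t₀ ^ 2 ≤ l * (∫ x' in (0:ℝ)..l, T x' t₀ ^ 2) := by
        intro x hx
        rcases eq_or_lt_of_le hx.2 with he | hlt
        · rw [he, hul]
          simpa using mul_nonneg hl.le f1
        · have hsubx : Icc x l ⊆ Icc (0:ℝ) l := Icc_subset_Icc hx.1 le_rfl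
          have hT2i : IntervalIntegrable (fun s => T s t₀ ^ 2) volume x l :=
            ((cT0.fun_pow 2).mono (by rw [uIcc_of_le hlt.le]; exact hsubx)).intervalIntegrable
          have hTi : IntervalIntegrable (fun s => T s t₀) volume x l :=
            (cT0.mono (by rw [uIcc_of_le hlt.le]; exact hsubx)).intervalIntegrable
          have hT2i0 : IntervalIntegrable (fun s => T s t₀ ^ 2) volume 0 x :=
            ((cT0.fun_pow 2).mono (by rw [uIcc_of_le hx.1]; exact Icc_subset_Icc_right hx.2)).intervalIntegrable
          have hJ0 : (0:ℝ) ≤ ∫ s in x..l, T s t₀ ^ 2 :=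
            intervalIntegral.integral_nonneg hlt.le (fun s _ => sq_nonneg _)
          have hJle : (∫ s in x..l, T s t₀ ^ 2) ≤ ∫ x' in (0:ℝ)..l, T x' t₀ ^ 2 := by
            have hadj := intervalIntegral.integral_add_adjacent_intervals hT2i0 hT2i
            have h0 : (0:ℝ) ≤ ∫ s in (0:ℝ)..x, T s t₀ ^ 2 :=
              intervalIntegral.integral_nonneg hx.1 (fun s _ => sq_nonneg _)
            linarith
          have expand : (∫ s in x..l, ((l-x)*T s t₀ - u x t₀) ^ 2)
              = (l-x)^2*(∫ s in x..l, T s t₀ ^ 2) - 2*(l-x)*u x t₀*(u x t₀)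
                + (l-x)*(u x t₀)^2 := by
            have e : ∀ s, ((l-x)*T s t₀ - u x t₀) ^ 2
                = ((l-x)^2*(T s t₀ ^ 2) - (2*(l-x)*u x t₀)*(T s t₀)) + (u x t₀)^2 :=
              fun s => by ring
            rw [intervalIntegral.integral_congr (fun s _ => e s),
              intervalIntegral.integral_add
                ((hT2i.const_mul _).sub (hTi.const_mul _)) intervalIntegrable_const,
              intervalIntegral.integral_sub (hT2i.const_mul _) (hTi.const_mul _),
              intervalIntegral.integral_const_mul, intervalIntegral.integral_const_mul,
              intervalIntegral.integral_const]
            have huu : (∫ s in x..l, T s t₀) = u x t₀ := rfl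
            rw [huu, smul_eq_mul]
          have hnn : (0:ℝ) ≤ ∫ s in x..l, ((l-x)*T s t₀ - u x t₀) ^ 2 :=
            intervalIntegral.integral_nonneg hlt.le (fun s _ => sq_nonneg _)
          have hkey : u x t₀ ^ 2 ≤ (l-x)*(∫ s in x..l, T s t₀ ^ 2) := by
            nlinarith [sub_pos.2 hlt]
          have : (l-x)*(∫ s in x..l, T s t₀ ^ 2) ≤ l * (∫ x' in (0:ℝ)..l, T x' t₀ ^ 2) := by
            nlinarith [hJ0, hJle, hx.1, hlt, f1]
          linarith
      have hmono := intervalIntegral.integral_mono_on hll (ii (cu0.fun_pow 2))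
        intervalIntegrable_const hpt
      rw [intervalIntegral.integral_const, smul_eq_mul] at hmono
      nlinarith [hmono]
    -- Young bound : ∫ q u ≤ (l²/2k) ∫ q² + (k/2l²) ∫ u²
    have f5 : (∫ x in (0:ℝ)..l, q x t₀ * u x t₀)
        ≤ l^2/(2*k) * (∫ x in (0:ℝ)..l, q x t₀ ^ 2)
          + k/(2*l^2) * (∫ x in (0:ℝ)..l, u x t₀ ^ 2) := by
      have hpt : ∀ x ∈ Icc (0:ℝ) l, q x t₀ * u x t₀
          ≤ l^2/(2*k)*(q x t₀ ^ 2) + k/(2*l^2)*(u x t₀ ^ 2) := by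
        intro x hx
        have e := gk_alg5 k l (q x t₀) (u x t₀) hk.ne' hl.ne'
        have hp : (0:ℝ) ≤ (l^2*q x t₀ - k*u x t₀)^2/(2*k*l^2) := by positivity
        linarith
      have hmono := intervalIntegral.integral_mono_on hll (ii (cq0.fun_mul cu0))
        (ii ((continuousOn_const.fun_mul (cq0.fun_pow 2)).fun_add (continuousOn_const.fun_mul (cu0.fun_pow 2)))) hpt
      rwa [intervalIntegral.integral_add
          ((ii (cq0.fun_pow 2)).const_mul _) ((ii (cu0.fun_pow 2)).const_mul _),
        intervalIntegral.integral_const_mul, intervalIntegral.integral_const_mul] at hmono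
    -- the value of L'
    have hL'eq : (2*l^2 + 2*μ2 + τq*k/(ρ*c)) *
        (ρ*c/2 * (∫ x in (0:ℝ)..l, 2 * T x t₀ * Tt x t₀)
          + τq/(2*k) * (∫ x in (0:ℝ)..l, 2 * q x t₀ * qt x t₀))
      + (ρ*c/2 * (∫ x in (0:ℝ)..l, 2 * u x t₀ * (q x t₀ / (ρ*c)))
          + ρ*c*μ2/2 * (∫ x in (0:ℝ)..l, 2 * T x t₀ * Tt x t₀)
          + τq * (∫ x in (0:ℝ)..l, (qt x t₀ * u x t₀ + q x t₀ * (q x t₀ / (ρ*c)))))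
      = -((2*l^2+2*μ2+τq*k/(ρ*c))*μ2/k)*(∫ x in (0:ℝ)..l, qx x t₀ ^ 2)
        - (2*(l^2+μ2)/k)*(∫ x in (0:ℝ)..l, q x t₀ ^ 2)
        - k*(∫ x in (0:ℝ)..l, T x t₀ ^ 2)
        - (μ2*qx 0 t₀ - k*T 0 t₀)*(∫ s in (0:ℝ)..l, T s t₀) := by
      rw [D1, D2, D3, D4, E1, E2, E3, E4]
      exact gk_algL l μ2 τq k ρ c _ _ _ _ _ _ _ _ hτq.ne' hk.ne' hρc.ne'
    -- scalar facts about β and ω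
    have hb1 : β ≤ 2*k/(ρ*c) := by rw [hβ]; exact min_le_left _ _
    have hb2 : β ≤ 4*(l^2+μ2)/τq := by rw [hβ]; exact min_le_right _ _
    have hM0 : (0:ℝ) < 3*l^2+3*μ2+2*(τq*k/(ρ*c)) := by positivity
    have hω0 : (0:ℝ) ≤ ω := by
      rw [hω, hβ]
      have : (0:ℝ) ≤ min (2*k/(ρ*c)) (4*(l^2+μ2)/τq) :=
        le_min (by positivity) (by positivity)
      positivity
    have hωM : ω * (3*l^2+3*μ2+2*(τq*k/(ρ*c))) = β := by
      rw [hω]; field_simp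
    have c3 : β*(ρ*c/2) ≤ k := by
      have h := (le_div_iff₀ hρc).1 hb1
      linarith
    have c4 : β*(τq/(2*k)) ≤ 2*(l^2+μ2)/k := by
      have h := (le_div_iff₀ hτq).1 hb2
      rw [show β*(τq/(2*k)) = (β*τq)/(2*k) by ring,
        div_le_div_iff₀ (by positivity) hk]
      nlinarith
    -- the value of 𝓛 and C_T
    have hgkLv : gkL l ρ c τq μ2 k T q t₀
        = (2*l^2 + 2*μ2 + τq*k/(ρ*c)) *
            (ρ*c/2*(∫ x in (0:ℝ)..l, T x t₀ ^ 2) + τq/(2*k)*(∫ x in (0:ℝ)..l, q x t₀ ^ 2))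
          + (ρ*c/2*(∫ x in (0:ℝ)..l, u x t₀ ^ 2)
            + ρ*c*μ2/2*(∫ x in (0:ℝ)..l, T x t₀ ^ 2)
            + τq*(∫ x in (0:ℝ)..l, q x t₀ * u x t₀)) := rfl
    have hCTv : gkCT l μ2 k T qx t₀
        = (μ2*qx 0 t₀ - k*T 0 t₀) * (∫ s in (0:ℝ)..l, T s t₀) := rfl
    -- 𝓛 ≤ M · E
    have s1 : ρ*c/2*(∫ x in (0:ℝ)..l, u x t₀ ^ 2)
        ≤ ρ*c/2*(l^2*(∫ x in (0:ℝ)..l, T x t₀ ^ 2)) :=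
      mul_le_mul_of_nonneg_left f4 (by positivity)
    have s2 : τq*(∫ x in (0:ℝ)..l, q x t₀ * u x t₀)
        ≤ τq*(l^2/(2*k)*(∫ x in (0:ℝ)..l, q x t₀ ^ 2)
            + k/(2*l^2)*(∫ x in (0:ℝ)..l, u x t₀ ^ 2)) :=
      mul_le_mul_of_nonneg_left f5 hτq.le
    have s3 : τq*(k/(2*l^2)*(∫ x in (0:ℝ)..l, u x t₀ ^ 2))
        ≤ τq*(k/(2*l^2)*(l^2*(∫ x in (0:ℝ)..l, T x t₀ ^ 2))) :=
      mul_le_mul_of_nonneg_left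
        (mul_le_mul_of_nonneg_left f4 (by positivity)) hτq.le
    have c5 := gk_alg6 τq k l (∫ x in (0:ℝ)..l, T x t₀ ^ 2) hl.ne'
    have cM := gk_alg7 l μ2 τq k ρ c (∫ x in (0:ℝ)..l, T x t₀ ^ 2)
      (∫ x in (0:ℝ)..l, q x t₀ ^ 2) hk.ne' hρc.ne'
    have pos1 : (0:ℝ) ≤ (μ2*τq/(2*k) + τq*τq/(2*(ρ*c)))*(∫ x in (0:ℝ)..l, q x t₀ ^ 2) :=
      mul_nonneg (by positivity) f2
    have hGle : gkL l ρ c τq μ2 k T q t₀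
        ≤ (3*l^2+3*μ2+2*(τq*k/(ρ*c))) *
            (ρ*c/2*(∫ x in (0:ℝ)..l, T x t₀ ^ 2) + τq/(2*k)*(∫ x in (0:ℝ)..l, q x t₀ ^ 2)) := by
      rw [hgkLv]
      ring_nf at s1 s2 s3 c5 cM pos1 ⊢
      linarith [s1, s2, s3, c5, cM, pos1]
    have hfin : ω * gkL l ρ c τq μ2 k T q t₀
        ≤ k*(∫ x in (0:ℝ)..l, T x t₀ ^ 2) + 2*(l^2+μ2)/k*(∫ x in (0:ℝ)..l, q x t₀ ^ 2) := by
      have h1 : ω * gkL l ρ c τq μ2 k T q t₀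
          ≤ ω * ((3*l^2+3*μ2+2*(τq*k/(ρ*c))) *
            (ρ*c/2*(∫ x in (0:ℝ)..l, T x t₀ ^ 2) + τq/(2*k)*(∫ x in (0:ℝ)..l, q x t₀ ^ 2))) :=
        mul_le_mul_of_nonneg_left hGle hω0
      have h2 : ω * ((3*l^2+3*μ2+2*(τq*k/(ρ*c))) *
            (ρ*c/2*(∫ x in (0:ℝ)..l, T x t₀ ^ 2) + τq/(2*k)*(∫ x in (0:ℝ)..l, q x t₀ ^ 2)))
          = β*(ρ*c/2)*(∫ x in (0:ℝ)..l, T x t₀ ^ 2)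
            + β*(τq/(2*k))*(∫ x in (0:ℝ)..l, q x t₀ ^ 2) := by
        rw [← hωM]; ring
      have h3 := mul_le_mul_of_nonneg_right c3 f1
      have h4 := mul_le_mul_of_nonneg_right c4 f2
      linarith
    have habs : -((μ2*qx 0 t₀ - k*T 0 t₀) * (∫ s in (0:ℝ)..l, T s t₀))
        ≤ |(μ2*qx 0 t₀ - k*T 0 t₀) * (∫ s in (0:ℝ)..l, T s t₀)| := neg_le_abs _
    have hqx2pos : (0:ℝ) ≤ (2*l^2+2*μ2+τq*k/(ρ*c))*μ2/k * (∫ x in (0:ℝ)..l, qx x t₀ ^ 2) :=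
      mul_nonneg (by positivity) f3
    rw [hL'eq, hCTv]
    linarith [hfin, habs, hqx2pos]
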